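/- arXiv:1901.05336 — 6 statements merged into one kernel-verified Lean document; each statement's English description precedes it below -/
import Mathlib

section
/- For every r > 0, the series ∑_{n=0}^{∞} p(n, r)/(n + 1) converges and equals (1/r) · (1 - (1 + r/3.5)^(-3.5)), i.e., the expected value of 1/(N+1) under the cell-occupancy distribution p(·, r) equals L(r)/r where L(r) = 1 - (1 + r/3.5)^(-3.5). -/
open MeasureTheory Set Filter

/-- Negative binomial series. -/
lemma neg_binom_hasSum {s x : ℝ} (hs : 0 < s) (hx0 : 0 < x) (hx1 : x < 1) :
    HasSum (fun n : ℕ => Real.Gamma ((n : ℝ) + s) * x ^ n /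
        (Real.Gamma s * (Nat.factorial n : ℝ)))
      ((1 - x) ^ (-s : ℝ)) := by
  have hΓ : (0 : ℝ) < Real.Gamma s := Real.Gamma_pos_of_pos hs
  set F : ℕ → ℝ → ℝ := fun n t =>
    (x ^ n / (Nat.factorial n : ℝ)) * (t ^ ((n : ℝ) + s - 1) * Real.exp (-(1 * t))) with hFdef
  have hint : ∀ n : ℕ, IntegrableOn (F n) (Ioi 0) := by
    intro n
    apply Integrable.const_mul
    refine (Real.GammaIntegral_convergent (s := (n : ℝ) + s) (by positivity)).congr_fun
      (fun t ht => by simp only [one_mul]; ring) measurableSet_Ioi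
  have hval : ∀ n : ℕ, (∫ t in Ioi 0, F n t) =
      Real.Gamma ((n : ℝ) + s) * x ^ n / (Nat.factorial n : ℝ) := by
    intro n
    rw [hFdef]
    rw [MeasureTheory.integral_const_mul,
      Real.integral_rpow_mul_exp_neg_mul_Ioi (by positivity) one_pos]
    norm_num
    ring
  have hnorm : ∀ n : ℕ, (∫ t in Ioi 0, ‖F n t‖) = ∫ t in Ioi 0, F n t := by
    intro n
    refine setIntegral_congr_fun measurableSet_Ioi fun t ht => ?_
    have ht' : (0 : ℝ) < t := ht
    exact Real.norm_of_nonneg (by positivity)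
  -- summability of the integrals, via the ratio test
  have hA : Summable fun n : ℕ =>
      Real.Gamma ((n : ℝ) + s) * x ^ n / (Nat.factorial n : ℝ) := by
    have hne : ∀ n : ℕ,
        Real.Gamma ((n : ℝ) + s) * x ^ n / (Nat.factorial n : ℝ) ≠ 0 := by
      intro n
      have h1 : (0:ℝ) < Real.Gamma ((n : ℝ) + s) := Real.Gamma_pos_of_pos (by positivity)
      have h2 : (0:ℝ) < (Nat.factorial n : ℝ) := by positivity
      positivity
    refine summable_of_ratio_test_tendsto_lt_one hx1
      (Eventually.of_forall hne) ?_
    have key : ∀ n : ℕ,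
        ‖Real.Gamma (((n+1 : ℕ) : ℝ) + s) * x ^ (n+1) / (Nat.factorial (n+1) : ℝ)‖ /
          ‖Real.Gamma ((n : ℝ) + s) * x ^ n / (Nat.factorial n : ℝ)‖
        = x * (1 + (s - 1) / ((n : ℝ) + 1)) := by
      intro n
      have hGpos : (0:ℝ) < Real.Gamma ((n : ℝ) + s) := Real.Gamma_pos_of_pos (by positivity)
      have hG1pos : (0:ℝ) < Real.Gamma (((n+1 : ℕ) : ℝ) + s) :=
        Real.Gamma_pos_of_pos (by positivity)
      have hfac : (0:ℝ) < (Nat.factorial n : ℝ) := by positivity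
      have hfac1 : (0:ℝ) < (Nat.factorial (n+1) : ℝ) := by positivity
      rw [Real.norm_of_nonneg (by positivity), Real.norm_of_nonneg (by positivity)]
      have hrec : Real.Gamma (((n+1 : ℕ) : ℝ) + s)
          = ((n : ℝ) + s) * Real.Gamma ((n : ℝ) + s) := by
        have : (((n+1 : ℕ) : ℝ) + s) = ((n : ℝ) + s) + 1 := by push_cast; ring
        rw [this, Real.Gamma_add_one (by positivity)]
      have hfacrec : (Nat.factorial (n+1) : ℝ) = ((n : ℝ) + 1) * (Nat.factorial n : ℝ) := by
        push_cast [Nat.factorial_succ]; ring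
      rw [hrec, hfacrec]
      have hn1 : ((n : ℝ) + 1) ≠ 0 := by positivity
      field_simp
      ring
    have htend : Tendsto (fun n : ℕ => x * (1 + (s - 1) / ((n : ℝ) + 1))) atTop
        (nhds (x * (1 + 0))) := by
      refine Tendsto.const_mul x (Tendsto.const_add 1 ?_)
      exact Tendsto.div_atTop tendsto_const_nhds
        (tendsto_atTop_add_const_right _ 1 tendsto_natCast_atTop_atTop)
    simp only [add_zero, mul_one] at htend
    exact htend.congr (fun n => (key n).symm)
  have hF_sum : Summable fun n : ℕ => ∫ t in Ioi 0, ‖F n t‖ := by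
    have : (fun n : ℕ => ∫ t in Ioi 0, ‖F n t‖)
        = fun n : ℕ => Real.Gamma ((n : ℝ) + s) * x ^ n / (Nat.factorial n : ℝ) :=
      funext fun n => (hnorm n).trans (hval n)
    rw [this]; exact hA
  have hswap := MeasureTheory.hasSum_integral_of_summable_integral_norm
    (μ := volume.restrict (Ioi 0)) hint hF_sum
  -- compute the pointwise tsum
  have htsum : (∫ t in Ioi 0, (∑' n, F n t))
      = ∫ t in Ioi 0, t ^ (s - 1) * Real.exp (-((1 - x) * t)) := by
    refine setIntegral_congr_fun measurableSet_Ioi fun t ht => ?_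
    have ht' : (0 : ℝ) < t := ht
    have hexp : HasSum (fun n : ℕ => (x * t) ^ n / (Nat.factorial n : ℝ))
        (Real.exp (x * t)) := by
      rw [Real.exp_eq_exp_ℝ]
      exact NormedSpace.expSeries_div_hasSum_exp (𝔸 := ℝ) (x * t)
    have h2 : HasSum (fun n : ℕ => F n t)
        (Real.exp (x * t) * (t ^ (s - 1) * Real.exp (-t))) := by
      refine (hexp.mul_right (t ^ (s - 1) * Real.exp (-t))).congr_fun fun n => ?_
      have hrpow : t ^ ((n : ℝ) + s - 1) = t ^ (n : ℕ) * t ^ (s - 1) := by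
        rw [← Real.rpow_natCast t n, ← Real.rpow_add ht']
        ring_nf
      rw [hFdef]
      simp only [one_mul, hrpow, mul_pow]
      ring
    rw [h2.tsum_eq, show -((1 - x) * t) = x * t + -t by ring, Real.exp_add]
    ring
  rw [htsum, Real.integral_rpow_mul_exp_neg_mul_Ioi hs (by linarith)] at hswap
  have hfun : (fun n : ℕ => ∫ t in Ioi 0, F n t)
      = fun n : ℕ => Real.Gamma ((n : ℝ) + s) * x ^ n / (Nat.factorial n : ℝ) :=
    funext hval
  rw [hfun] at hswap
  have hdiv := hswap.div_const (Real.Gamma s)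
  have h1x : (0:ℝ) < 1 - x := by linarith
  have hvalue : (1 / (1 - x)) ^ s * Real.Gamma s / Real.Gamma s = (1 - x) ^ (-s : ℝ) := by
    rw [mul_div_assoc, div_self hΓ.ne', mul_one, one_div,
      Real.inv_rpow h1x.le, ← Real.rpow_neg h1x.le]
  rw [hvalue] at hdiv
  have hfe : (fun n : ℕ => Real.Gamma ((n : ℝ) + s) * x ^ n / (Nat.factorial n : ℝ)
        / Real.Gamma s)
      = fun n : ℕ => Real.Gamma ((n : ℝ) + s) * x ^ n
        / (Real.Gamma s * (Nat.factorial n : ℝ)) := by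
    funext n
    rw [div_div, mul_comm (Nat.factorial n : ℝ)]
  rwa [hfe] at hdiv

/-- Eq. (3): cell-occupancy probability mass function. -/
noncomputable def cellOcc (n : ℕ) (r : ℝ) : ℝ :=
  (3.5 : ℝ) ^ (3.5 : ℝ) * Real.Gamma ((n : ℝ) + 4.5) * r ^ n /
    (Real.Gamma 3.5 * Real.Gamma ((n : ℝ) + 1) * (3.5 + r) ^ ((n : ℝ) + 4.5))

theorem cellOcc_expectation_inv_succ (r : ℝ) (hr : 0 < r) :
    HasSum (fun n : ℕ => cellOcc n r / ((n : ℝ) + 1))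
      ((1 / r) * (1 - (1 + r / 3.5) ^ (-3.5 : ℝ))) := by
  have hc : (0:ℝ) < 3.5 := by norm_num
  have hcr : (0:ℝ) < 3.5 + r := by linarith
  set x : ℝ := r / (3.5 + r) with hxdef
  have hx0 : 0 < x := div_pos hr hcr
  have hx1 : x < 1 := (div_lt_one hcr).2 (by linarith)
  have hΓ : (0:ℝ) < Real.Gamma 3.5 := Real.Gamma_pos_of_pos hc
  set f : ℕ → ℝ := fun n =>
    Real.Gamma ((n : ℝ) + 3.5) * x ^ n / (Real.Gamma 3.5 * (Nat.factorial n : ℝ)) with hfdef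
  have h : HasSum f ((1 - x) ^ (-3.5 : ℝ)) := neg_binom_hasSum hc hx0 hx1
  have hf0 : f 0 = 1 := by
    simp [hfdef, div_self hΓ.ne']
  have h2 : HasSum (fun n : ℕ => f (n + 1)) ((1 - x) ^ (-3.5 : ℝ) - 1) := by
    refine (hasSum_nat_add_iff 1).2 ?_
    simpa [hf0] using h
  set K : ℝ := (3.5 : ℝ) ^ (3.5 : ℝ) / ((3.5 + r) ^ (3.5 : ℝ) * r) with hKdef
  have h3 := h2.mul_left K
  have hP : (0:ℝ) < (3.5 + r) ^ (3.5 : ℝ) := Real.rpow_pos_of_pos hcr _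
  have hQ : (0:ℝ) < (3.5 : ℝ) ^ (3.5 : ℝ) := Real.rpow_pos_of_pos hc _
  have hfun : ∀ n : ℕ, K * f (n + 1) = cellOcc n r / ((n : ℝ) + 1) := by
    intro n
    have hΓn : Real.Gamma ((n : ℝ) + 1) = (Nat.factorial n : ℝ) :=
      Real.Gamma_nat_eq_factorial n
    have hc1 : (((n + 1 : ℕ)) : ℝ) + 3.5 = (n : ℝ) + 4.5 := by push_cast; ring
    have hpow : (3.5 + r) ^ ((n : ℝ) + 4.5)
        = (3.5 + r) ^ (3.5 : ℝ) * (3.5 + r) ^ (n + 1 : ℕ) := by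
      rw [show (n : ℝ) + 4.5 = 3.5 + ((n + 1 : ℕ) : ℝ) by push_cast; ring,
        Real.rpow_add hcr, Real.rpow_natCast]
    have hxpow : x ^ (n + 1) = r ^ (n + 1) / (3.5 + r) ^ (n + 1) := div_pow r _ _
    have hfac : (Nat.factorial (n + 1) : ℝ) = ((n : ℝ) + 1) * (Nat.factorial n : ℝ) := by
      push_cast [Nat.factorial_succ]; ring
    have hfacpos : (0:ℝ) < (Nat.factorial n : ℝ) := by positivity
    have hn1 : (0:ℝ) < (n : ℝ) + 1 := by positivity
    have hcrp : (0:ℝ) < (3.5 + r) ^ (n + 1 : ℕ) := by positivity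
    rw [hfdef, hKdef]
    simp only [hc1, hxpow, hfac]
    rw [cellOcc, hΓn, hpow]
    field_simp
    ring
  have hval : K * ((1 - x) ^ (-3.5 : ℝ) - 1)
      = (1 / r) * (1 - (1 + r / 3.5) ^ (-3.5 : ℝ)) := by
    have h1x : 1 - x = 3.5 / (3.5 + r) := by
      rw [hxdef]; field_simp; ring
    have hS : (1 - x) ^ (-3.5 : ℝ)
        = (3.5 + r) ^ (3.5 : ℝ) / (3.5 : ℝ) ^ (3.5 : ℝ) := by
      rw [h1x, Real.rpow_neg (by positivity), Real.div_rpow hc.le hcr.le, inv_div]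
    have hT : (1 + r / 3.5) ^ (-3.5 : ℝ)
        = (3.5 : ℝ) ^ (3.5 : ℝ) / (3.5 + r) ^ (3.5 : ℝ) := by
      rw [show (1:ℝ) + r / 3.5 = (3.5 + r) / 3.5 by field_simp,
        Real.rpow_neg (by positivity), Real.div_rpow hcr.le hc.le, inv_div]
    rw [hS, hT, hKdef]
    field_simp
  rw [funext hfun, hval] at h3
  exact h3
end

section
/- For all constants k₁ > 0, k₂ > 0 and every exponent c with 0 < c ≤ 1, the potential spectral efficiency function F(B, P) = k₁ · B · (1 - exp(-k₂ · (P/B)^c)) is concave on the convex set {(B, P) ∈ ℝ² : B > 0, P ≥ 0}. (This is the joint curvature property, in the bandwidth and power variables, of the PSE of Eq. (6) that underlies Lemma 2 of the paper; F is the perspective of the concave function t ↦ k₁(1 - exp(-k₂ t^c)).) -/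
open Real Set

lemma phi_mono (k₁ k₂ : ℝ) (hk₁ : 0 < k₁) (hk₂ : 0 < k₂) :
    Monotone (fun u : ℝ => k₁ * (1 - Real.exp (-k₂ * u))) := by
  intro u v huv
  have h : Real.exp (-k₂ * v) ≤ Real.exp (-k₂ * u) :=
    Real.exp_le_exp.2 (by nlinarith)
  simp only
  nlinarith

lemma phi_concave (k₁ k₂ : ℝ) (hk₁ : 0 < k₁) (hk₂ : 0 < k₂) :
    ConcaveOn ℝ Set.univ (fun u : ℝ => k₁ * (1 - Real.exp (-k₂ * u))) := by
  refine ⟨convex_univ, fun x _ y _ a b ha hb hab => ?_⟩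
  have h := convexOn_exp.2 (Set.mem_univ (-k₂ * x)) (Set.mem_univ (-k₂ * y)) ha hb hab
  simp only [smul_eq_mul] at h ⊢
  have : Real.exp (a * (-k₂ * x) + b * (-k₂ * y)) = Real.exp (-k₂ * (a * x + b * y)) := by
    ring_nf
  nlinarith

lemma g_concave (k₁ k₂ c : ℝ) (hk₁ : 0 < k₁) (hk₂ : 0 < k₂)
    (hc0 : 0 < c) (hc1 : c ≤ 1) :
    ConcaveOn ℝ (Set.Ici (0:ℝ)) (fun t : ℝ => k₁ * (1 - Real.exp (-k₂ * t ^ c))) := by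
  refine ⟨convex_Ici 0, fun x hx y hy a b ha hb hab => ?_⟩
  have h1 := (Real.concaveOn_rpow hc0.le hc1).2 hx hy ha hb hab
  simp only [smul_eq_mul] at h1 ⊢
  have h2 := (phi_concave k₁ k₂ hk₁ hk₂).2 (Set.mem_univ (x ^ c)) (Set.mem_univ (y ^ c)) ha hb hab
  simp only [smul_eq_mul] at h2
  exact h2.trans (phi_mono k₁ k₂ hk₁ hk₂ h1)

theorem PSE_concaveOn (k₁ k₂ c : ℝ) (hk₁ : 0 < k₁) (hk₂ : 0 < k₂)
    (hc0 : 0 < c) (hc1 : c ≤ 1) :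
    ConcaveOn ℝ {p : ℝ × ℝ | 0 < p.1 ∧ 0 ≤ p.2}
      (fun p : ℝ × ℝ => k₁ * p.1 * (1 - Real.exp (-k₂ * (p.2 / p.1) ^ c))) := by
  have hset : Convex ℝ {p : ℝ × ℝ | 0 < p.1 ∧ 0 ≤ p.2} :=
    (convex_Ioi (0:ℝ)).prod (convex_Ici (0:ℝ))
  refine ⟨hset, fun p hp q hq a b ha hb hab => ?_⟩
  obtain ⟨hp1, hp2⟩ := hp
  obtain ⟨hq1, hq2⟩ := hq
  set B := a * p.1 + b * q.1 with hBdef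
  have hB : 0 < B := by
    rcases eq_or_lt_of_le ha with h | h
    · have hb1 : b = 1 := by linarith
      simp [hBdef, ← h, hb1, hq1]
    · nlinarith [mul_nonneg hb hq1.le]
  set w₁ := a * p.1 / B with hw1
  set w₂ := b * q.1 / B with hw2
  have hw₁0 : 0 ≤ w₁ := by positivity
  have hw₂0 : 0 ≤ w₂ := by positivity
  have hwsum : w₁ + w₂ = 1 := by
    rw [hw1, hw2, ← add_div, div_eq_one_iff_eq hB.ne']
  have hx : p.2 / p.1 ∈ Set.Ici (0:ℝ) := Set.mem_Ici.2 (by positivity)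
  have hy : q.2 / q.1 ∈ Set.Ici (0:ℝ) := Set.mem_Ici.2 (by positivity)
  have hJ := (g_concave k₁ k₂ c hk₁ hk₂ hc0 hc1).2 hx hy hw₁0 hw₂0 hwsum
  simp only [smul_eq_mul] at hJ
  have hcomb : w₁ * (p.2 / p.1) + w₂ * (q.2 / q.1) = (a * p.2 + b * q.2) / B := by
    rw [hw1, hw2]
    field_simp
  rw [hcomb] at hJ
  -- multiply hJ by B > 0
  have hJB := mul_le_mul_of_nonneg_left hJ hB.le
  simp only [Prod.fst_add, Prod.snd_add, Prod.smul_fst, Prod.smul_snd, smul_eq_mul]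
  rw [← hBdef]
  have hexp1 : B * (w₁ * (k₁ * (1 - Real.exp (-k₂ * (p.2 / p.1) ^ c)))) =
      a * (k₁ * p.1 * (1 - Real.exp (-k₂ * (p.2 / p.1) ^ c))) := by
    rw [hw1]
    field_simp
  have hexp2 : B * (w₂ * (k₁ * (1 - Real.exp (-k₂ * (q.2 / q.1) ^ c)))) =
      b * (k₁ * q.1 * (1 - Real.exp (-k₂ * (q.2 / q.1) ^ c))) := by
    rw [hw2]
    field_simp
  calc a * (k₁ * p.1 * (1 - Real.exp (-k₂ * (p.2 / p.1) ^ c))) +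
        b * (k₁ * q.1 * (1 - Real.exp (-k₂ * (q.2 / q.1) ^ c)))
      = B * (w₁ * (k₁ * (1 - Real.exp (-k₂ * (p.2 / p.1) ^ c))) +
          w₂ * (k₁ * (1 - Real.exp (-k₂ * (q.2 / q.1) ^ c)))) := by
        rw [mul_add, hexp1, hexp2]
    _ ≤ B * (k₁ * (1 - Real.exp (-k₂ * ((a * p.2 + b * q.2) / B) ^ c))) := hJB
    _ = k₁ * B * (1 - Real.exp (-k₂ * ((a * p.2 + b * q.2) / B) ^ c)) := by ring
end

section
/- For all constants k₁ > 0, k₂ > 0, every exponent c with 0 < c ≤ 1, all bandwidths B₁, B₂ > 0 and powers P₁, P₂ ≥ 0, equality F(B₁ + B₂, P₁ + P₂) = F(B₁, P₁) + F(B₂, P₂) holds for the potential spectral efficiency F(B, P) = k₁ · B · (1 - exp(-k₂ · (P/B)^c)) if and only if the two allocations have equal power-to-bandwidth ratios, i.e., P₁ · B₂ = P₂ · B₁; in particular the inequality F(B₁ + B₂, P₁ + P₂) > F(B₁, P₁) + F(B₂, P₂) is strict whenever P₁/B₁ ≠ P₂/B₂. -/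
open Real

/-- Strict Jensen inequality for `x ↦ 1 - exp (-k₂ * x ^ c)` on `[0, ∞)`. -/
lemma PSE_key (k₂ c : ℝ) (hk₂ : 0 < k₂) (hc0 : 0 < c) (hc1 : c ≤ 1)
    (x y a b : ℝ) (hx : 0 ≤ x) (hy : 0 ≤ y) (hxy : x ≠ y)
    (ha : 0 < a) (hb : 0 < b) (hab : a + b = 1) :
    a * (1 - Real.exp (-k₂ * x ^ c)) + b * (1 - Real.exp (-k₂ * y ^ c)) <
      1 - Real.exp (-k₂ * (a * x + b * y) ^ c) := by
  set U := x ^ c with hU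
  set V := y ^ c with hV
  have hUV : U ≠ V := by
    rcases lt_or_gt_of_ne hxy with h | h
    · exact (Real.rpow_lt_rpow hx h hc0).ne
    · exact (Real.rpow_lt_rpow hy h hc0).ne'
  -- concavity of rpow: a*U + b*V ≤ (a*x + b*y)^c
  have step1 : a * U + b * V ≤ (a * x + b * y) ^ c := by
    have := (Real.concaveOn_rpow hc0.le hc1).2 (Set.mem_Ici.2 hx) (Set.mem_Ici.2 hy)
      ha.le hb.le hab
    simpa [smul_eq_mul] using this
  -- strict convexity of exp
  have step2 : Real.exp (-k₂ * (a * U + b * V)) <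
      a * Real.exp (-k₂ * U) + b * Real.exp (-k₂ * V) := by
    have hne : -k₂ * U ≠ -k₂ * V := by
      intro h
      exact hUV (mul_left_cancel₀ (by linarith : -k₂ ≠ 0) h)
    have := strictConvexOn_exp.2 (Set.mem_univ (-k₂ * U)) (Set.mem_univ (-k₂ * V))
      hne ha hb hab
    simp only [smul_eq_mul] at this
    calc Real.exp (-k₂ * (a * U + b * V))
        = Real.exp (a * (-k₂ * U) + b * (-k₂ * V)) := by ring_nf
      _ < a * Real.exp (-k₂ * U) + b * Real.exp (-k₂ * V) := this
  have step3 : Real.exp (-k₂ * (a * x + b * y) ^ c) ≤ Real.exp (-k₂ * (a * U + b * V)) := by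
    apply Real.exp_le_exp.2
    nlinarith
  nlinarith [Real.exp_pos (-k₂ * (a * x + b * y) ^ c)]

theorem PSE_superadditive_equality_iff (k₁ k₂ c : ℝ) (hk₁ : 0 < k₁) (hk₂ : 0 < k₂)
    (hc0 : 0 < c) (hc1 : c ≤ 1) (B₁ B₂ P₁ P₂ : ℝ)
    (hB₁ : 0 < B₁) (hB₂ : 0 < B₂) (hP₁ : 0 ≤ P₁) (hP₂ : 0 ≤ P₂) :
    (k₁ * (B₁ + B₂) * (1 - Real.exp (-k₂ * ((P₁ + P₂) / (B₁ + B₂)) ^ c)) =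
        k₁ * B₁ * (1 - Real.exp (-k₂ * (P₁ / B₁) ^ c)) +
        k₁ * B₂ * (1 - Real.exp (-k₂ * (P₂ / B₂) ^ c)) ↔ P₁ * B₂ = P₂ * B₁) ∧
    (P₁ / B₁ ≠ P₂ / B₂ →
      k₁ * (B₁ + B₂) * (1 - Real.exp (-k₂ * ((P₁ + P₂) / (B₁ + B₂)) ^ c)) >
        k₁ * B₁ * (1 - Real.exp (-k₂ * (P₁ / B₁) ^ c)) +
        k₁ * B₂ * (1 - Real.exp (-k₂ * (P₂ / B₂) ^ c))) := by
  have hs : (0:ℝ) < B₁ + B₂ := by linarith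
  set x := P₁ / B₁ with hxdef
  set y := P₂ / B₂ with hydef
  have hx : 0 ≤ x := div_nonneg hP₁ hB₁.le
  have hy : 0 ≤ y := div_nonneg hP₂ hB₂.le
  have hrat : (x = y) ↔ P₁ * B₂ = P₂ * B₁ := div_eq_div_iff hB₁.ne' hB₂.ne'
  have hm : (P₁ + P₂) / (B₁ + B₂) = (B₁ / (B₁ + B₂)) * x + (B₂ / (B₁ + B₂)) * y := by
    rw [hxdef, hydef]
    field_simp
  -- strict inequality part
  have strict : x ≠ y →
      k₁ * (B₁ + B₂) * (1 - Real.exp (-k₂ * ((P₁ + P₂) / (B₁ + B₂)) ^ c)) >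
        k₁ * B₁ * (1 - Real.exp (-k₂ * x ^ c)) +
        k₁ * B₂ * (1 - Real.exp (-k₂ * y ^ c)) := by
    intro hxy
    have key := PSE_key k₂ c hk₂ hc0 hc1 x y (B₁ / (B₁ + B₂)) (B₂ / (B₁ + B₂))
      hx hy hxy (div_pos hB₁ hs) (div_pos hB₂ hs) (by field_simp)
    rw [hm]
    have hmul := mul_lt_mul_of_pos_left key (mul_pos hk₁ hs)
    calc k₁ * B₁ * (1 - Real.exp (-k₂ * x ^ c)) + k₁ * B₂ * (1 - Real.exp (-k₂ * y ^ c))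
        = k₁ * (B₁ + B₂) * ((B₁ / (B₁ + B₂)) * (1 - Real.exp (-k₂ * x ^ c)) +
            (B₂ / (B₁ + B₂)) * (1 - Real.exp (-k₂ * y ^ c))) := by
          field_simp
      _ < k₁ * (B₁ + B₂) *
            (1 - Real.exp (-k₂ * ((B₁ / (B₁ + B₂)) * x + (B₂ / (B₁ + B₂)) * y) ^ c)) := hmul
  refine ⟨⟨fun heq => ?_, fun hPB => ?_⟩, strict⟩
  · by_contra hne
    have hxy : x ≠ y := fun h => hne (hrat.1 h)
    exact absurd heq (ne_of_gt (strict hxy))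
  · have hxy : x = y := hrat.2 hPB
    have hP₁' : P₁ = x * B₁ := by rw [hxdef]; field_simp
    have hP₂' : P₂ = x * B₂ := by rw [hxy, hydef]; field_simp
    have hmx : (P₁ + P₂) / (B₁ + B₂) = x := by
      rw [hP₁', hP₂']
      field_simp
    rw [hmx, ← hxy]
    ring
end

section
/- For all constants k₁ > 0, k₂ > 0, every exponent c with 0 < c ≤ 1 and every fixed transmit power P > 0, the potential spectral efficiency B ↦ F(B, P) = k₁ · B · (1 - exp(-k₂ · (P/B)^c)) is strictly increasing in the bandwidth B on (0, ∞). -/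
lemma key_ineq (a b : ℝ) (hb : 0 < b) (hba : b < a) :
    b * (1 - Real.exp (-a)) < a * (1 - Real.exp (-b)) := by
  have ha : 0 < a := hb.trans hba
  have h := strictConvexOn_exp.2 (Set.mem_univ (0 : ℝ)) (Set.mem_univ (-a))
    (by intro h; nlinarith) (by have := (div_lt_one ha).mpr hba; linarith : (0:ℝ) < 1 - b / a)
    (by positivity : (0:ℝ) < b / a) (by ring)
  simp only [smul_eq_mul, mul_zero, zero_add, Real.exp_zero, mul_one] at h
  have hcalc : b / a * -a = -b := by field_simp
  rw [hcalc] at h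
  have h2 := mul_lt_mul_of_pos_left h ha
  have h3 : a * (1 - b / a + b / a * Real.exp (-a)) = a - b + b * Real.exp (-a) := by
    field_simp
  rw [h3] at h2
  nlinarith [h2]

theorem PSE_strictMono_in_bandwidth (k₁ k₂ c P : ℝ) (hk₁ : 0 < k₁) (hk₂ : 0 < k₂)
    (hc0 : 0 < c) (hc1 : c ≤ 1) (hP : 0 < P) :
    StrictMonoOn (fun B : ℝ => k₁ * B * (1 - Real.exp (-k₂ * (P / B) ^ c)))
      (Set.Ioi (0 : ℝ)) := by
  intro x hx y hy hxy
  simp only [Set.mem_Ioi] at hx hy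
  set u : ℝ := P / x with hu_def
  set v : ℝ := P / y with hv_def
  have hu : 0 < u := by positivity
  have hv : 0 < v := by positivity
  have hvu : v < u := div_lt_div_of_pos_left hP hx hxy
  set a : ℝ := k₂ * u ^ c with ha_def
  set b : ℝ := k₂ * v ^ c with hb_def
  have ha : 0 < a := by positivity
  have hb : 0 < b := by positivity
  have hba : b < a := by
    have := Real.rpow_lt_rpow hv.le hvu hc0
    exact mul_lt_mul_of_pos_left this hk₂
  have key := key_ineq a b hb hba
  -- v/u = x/y and (v/u)^c ≥ v/u
  have hvu1 : v / u ≤ 1 := div_le_one_of_le₀ hvu.le hu.le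
  have hpow : v / u ≤ (v / u) ^ c := by
    have h := Real.rpow_le_rpow_of_exponent_ge (by positivity) hvu1 hc1
    rwa [Real.rpow_one] at h
  have hdiv : (v / u) ^ c = b / a := by
    rw [Real.div_rpow hv.le hu.le, hb_def, ha_def, mul_div_mul_left _ _ (ne_of_gt hk₂)]
  have hxy_vu : v / u = x / y := by
    rw [hv_def, hu_def]
    field_simp
  have hxayb : x * a ≤ y * b := by
    have : x / y ≤ b / a := by rw [← hxy_vu, ← hdiv]; exact hpow
    rw [div_le_div_iff₀ hy ha] at this
    linarith
  have h1a : 0 < 1 - Real.exp (-a) := by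
    have : Real.exp (-a) < 1 := Real.exp_lt_one_iff.mpr (by linarith)
    linarith
  have main : x * (1 - Real.exp (-a)) < y * (1 - Real.exp (-b)) := by
    have h1 : x * a * (1 - Real.exp (-a)) ≤ y * b * (1 - Real.exp (-a)) :=
      mul_le_mul_of_nonneg_right hxayb h1a.le
    have h2 : y * (b * (1 - Real.exp (-a))) < y * (a * (1 - Real.exp (-b))) :=
      mul_lt_mul_of_pos_left key hy
    have := lt_of_le_of_lt (by linarith : a * (x * (1 - Real.exp (-a))) ≤ y * (b * (1 - Real.exp (-a)))) h2
    nlinarith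
  simp only
  have e1 : -k₂ * (P / x) ^ c = -a := by rw [ha_def, hu_def]; ring
  have e2 : -k₂ * (P / y) ^ c = -b := by rw [hb_def, hv_def]; ring
  rw [e1, e2, mul_assoc, mul_assoc]
  exact mul_lt_mul_of_pos_left main hk₁
end

section
/- For all constants C > 0, A > 0 and Υ ≥ 0, the function ℓ ↦ C · (ℓ/(1 + ℓΥ)) · (1 - exp(-A · (1 + ℓΥ))) is strictly increasing on [0, ∞). -/
theorem PSE_strictMono_in_load (C A Υ : ℝ) (hC : 0 < C) (hA : 0 < A) (hΥ : 0 ≤ Υ) :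
    StrictMonoOn
      (fun ℓ : ℝ => C * (ℓ / (1 + ℓ * Υ)) * (1 - Real.exp (-A * (1 + ℓ * Υ))))
      (Set.Ici (0 : ℝ)) := by
  intro x hx y hy hxy
  simp only [Set.mem_Ici] at hx hy
  have hpx : (0:ℝ) < 1 + x * Υ := by nlinarith [mul_nonneg hx hΥ]
  have hpy : (0:ℝ) < 1 + y * Υ := by nlinarith [mul_nonneg hy hΥ]
  -- g strictly increasing
  have hg : x / (1 + x * Υ) < y / (1 + y * Υ) := by
    rw [div_lt_div_iff₀ hpx hpy]
    nlinarith [mul_nonneg (mul_nonneg hx hy) hΥ]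
  have hgx : 0 ≤ x / (1 + x * Υ) := div_nonneg hx hpx.le
  -- h positive and monotone
  have hhx : 0 < 1 - Real.exp (-A * (1 + x * Υ)) := by
    have : Real.exp (-A * (1 + x * Υ)) < 1 := by
      rw [Real.exp_lt_one_iff]
      nlinarith
    linarith
  have hhy : 0 < 1 - Real.exp (-A * (1 + y * Υ)) := by
    have : Real.exp (-A * (1 + y * Υ)) < 1 := by
      rw [Real.exp_lt_one_iff]
      nlinarith
    linarith
  have hhm : 1 - Real.exp (-A * (1 + x * Υ)) ≤ 1 - Real.exp (-A * (1 + y * Υ)) := by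
    have : Real.exp (-A * (1 + y * Υ)) ≤ Real.exp (-A * (1 + x * Υ)) := by
      apply Real.exp_le_exp.mpr
      nlinarith [mul_le_mul_of_nonneg_left (mul_le_mul_of_nonneg_right hxy.le hΥ) hA.le]
    linarith
  simp only
  have step1 : C * (x / (1 + x * Υ)) * (1 - Real.exp (-A * (1 + x * Υ)))
      ≤ C * (x / (1 + x * Υ)) * (1 - Real.exp (-A * (1 + y * Υ))) := by
    apply mul_le_mul_of_nonneg_left hhm
    positivity
  have step2 : C * (x / (1 + x * Υ)) * (1 - Real.exp (-A * (1 + y * Υ)))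
      < C * (y / (1 + y * Υ)) * (1 - Real.exp (-A * (1 + y * Υ))) := by
    apply mul_lt_mul_of_pos_right _ hhy
    exact mul_lt_mul_of_pos_left hg hC
  linarith
end

section
/- For all constants C > 0, A > 0 and Υ ≥ 0, the function r ↦ C · (L(r)/(1 + L(r)·Υ)) · (1 - exp(-A · (1 + L(r)·Υ))), where L(r) = 1 - (1 + r/3.5)^(-3.5), is strictly increasing on [0, ∞); i.e., the closed-form potential spectral efficiency of Eq. (6) is strictly increasing in the ratio r = λ_T/λ_BS of user to base-station densities. -/
lemma g_strict (C A Υ : ℝ) (hC : 0 < C) (hA : 0 < A) (hΥ : 0 ≤ Υ)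
    {a b : ℝ} (ha : 0 ≤ a) (hab : a < b) :
    C * (a / (1 + a * Υ)) * (1 - Real.exp (-A * (1 + a * Υ))) <
    C * (b / (1 + b * Υ)) * (1 - Real.exp (-A * (1 + b * Υ))) := by
  have hb : 0 ≤ b := ha.trans hab.le
  have hu : (0:ℝ) < 1 + a * Υ := by positivity
  have hv : (0:ℝ) < 1 + b * Υ := by positivity
  have huv : 1 + a * Υ ≤ 1 + b * Υ := by nlinarith
  have h1 : C * (a / (1 + a * Υ)) < C * (b / (1 + b * Υ)) := by
    apply mul_lt_mul_of_pos_left _ hC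
    rw [div_lt_div_iff₀ hu hv]
    nlinarith
  have h2 : 1 - Real.exp (-A * (1 + a * Υ)) ≤ 1 - Real.exp (-A * (1 + b * Υ)) := by
    have := Real.exp_le_exp.mpr (by nlinarith : -A * (1 + b * Υ) ≤ -A * (1 + a * Υ))
    linarith
  have h3 : 0 < 1 - Real.exp (-A * (1 + a * Υ)) := by
    have : Real.exp (-A * (1 + a * Υ)) < 1 := by
      rw [Real.exp_lt_one_iff]; nlinarith
    linarith
  have h4 : 0 ≤ C * (b / (1 + b * Υ)) := by positivity
  exact mul_lt_mul h1 h2 h3 h4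

theorem PSE_strictMono_in_density_ratio (C A Υ : ℝ) (hC : 0 < C) (hA : 0 < A) (hΥ : 0 ≤ Υ) :
    StrictMonoOn
      (fun r : ℝ =>
        C * ((1 - (1 + r / 3.5) ^ (-3.5 : ℝ)) / (1 + (1 - (1 + r / 3.5) ^ (-3.5 : ℝ)) * Υ)) *
          (1 - Real.exp (-A * (1 + (1 - (1 + r / 3.5) ^ (-3.5 : ℝ)) * Υ))))
      (Set.Ici (0 : ℝ)) := by
  intro x hx y hy hxy
  simp only [Set.mem_Ici] at hx hy
  set Lx := 1 - (1 + x / 3.5) ^ (-3.5 : ℝ) with hLx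
  set Ly := 1 - (1 + y / 3.5) ^ (-3.5 : ℝ) with hLy
  have hd : (0:ℝ) ≤ x / 3.5 := by positivity
  have hbx : (1:ℝ) ≤ 1 + x / 3.5 := by linarith
  have hLx0 : 0 ≤ Lx := by
    have := Real.rpow_le_one_of_one_le_of_nonpos hbx (by norm_num : (-3.5:ℝ) ≤ 0)
    simp [hLx]; linarith
  have hLxy : Lx < Ly := by
    have hdd : x / 3.5 < y / 3.5 := (div_lt_div_iff_of_pos_right (by norm_num)).mpr hxy
    have h : (1 + y / 3.5) ^ (-3.5:ℝ) < (1 + x / 3.5) ^ (-3.5:ℝ) :=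
      Real.rpow_lt_rpow_of_neg (by linarith) (by linarith) (by norm_num)
    simp only [hLx, hLy]; linarith
  exact g_strict C A Υ hC hA hΥ hLx0 hLxy
end
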